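/- Let Ω ⊂ ℝ^d be bounded with diameter R, h > 0, and for each pair of neighboring grid points (p,q) ∈ Σ^h (|p − q| = h) let I_h(p,q) be the common face of the cells Q_h(p), Q_h(q) (an axis-parallel (d−1)-cube of side h). Then ∫_Ω ∫_Ω |x − z| · 𝟙{[x,z] ∩ I_h(p,q) ≠ ∅} dx dz ≤ C_R h^{d−1}, where [x,z] is the segment from x to z and C_R depends only on R and d. -/

import Mathlib

open MeasureTheory
open scoped Classical Pointwise ENNReal NNReal


lemma aux_index {d : ℕ} {h : ℝ} (hh : 0 < h) (p q : EuclideanSpace ℝ (Fin d))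
    (hp : ∀ i, ∃ k : ℤ, p i = h * k) (hq : ∀ i, ∃ k : ℤ, q i = h * k)
    (hpq : dist p q = h) :
    ∃ i₀ : Fin d, |p i₀ - q i₀| = h ∧ ∀ i, i ≠ i₀ → p i = q i := by
  choose k hk using hp
  choose l hl using hq
  set n : Fin d → ℤ := fun i => k i - l i with hn
  have hdiff : ∀ i, p i - q i = h * n i := by
    intro i; rw [hk i, hl i, hn]; push_cast; ring
  have hsumR : ∑ i, ((n i : ℝ))^2 = 1 := by
    have h1 : dist p q ^ 2 = ∑ i, dist (p i) (q i) ^ 2 := by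
      rw [EuclideanSpace.dist_eq, Real.sq_sqrt]
      positivity
    have h2 : ∀ i, dist (p i) (q i) ^ 2 = h^2 * (n i : ℝ)^2 := by
      intro i; rw [Real.dist_eq, sq_abs, hdiff i]; ring
    rw [hpq] at h1
    simp_rw [h2, ← Finset.mul_sum] at h1
    have h1' : h ^ 2 * ∑ i, ((n i:ℝ))^2 = h ^ 2 * 1 := by rw [mul_one]; exact h1.symm
    exact mul_left_cancel₀ (pow_ne_zero 2 hh.ne') h1'
  have hsumZ : ∑ i, (n i)^2 = 1 := by exact_mod_cast hsumR
  have hex : ∃ i₀, n i₀ ≠ 0 := by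
    by_contra hc
    push_neg at hc
    simp [hc] at hsumZ
  obtain ⟨i₀, hi₀⟩ := hex
  have hsq : 1 ≤ (n i₀)^2 := by
    have := hi₀
    nlinarith [sq_nonneg (n i₀), Int.one_le_abs (hi₀), sq_abs (n i₀), abs_nonneg (n i₀)]
  have hrest : ∑ i ∈ Finset.univ.erase i₀, (n i)^2 = 0 := by
    have heq := Finset.add_sum_erase Finset.univ (fun i => (n i)^2) (Finset.mem_univ i₀)
    have hnn : 0 ≤ ∑ i ∈ Finset.univ.erase i₀, (n i)^2 :=
      Finset.sum_nonneg fun j _ => sq_nonneg (n j)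
    rw [← heq] at hsumZ
    have hsumZ' : n i₀ ^ 2 + ∑ i ∈ Finset.univ.erase i₀, (n i)^2 = 1 := hsumZ
    linarith
  have hzero : ∀ i, i ≠ i₀ → n i = 0 := by
    intro i hi
    have hmem : i ∈ Finset.univ.erase i₀ := Finset.mem_erase.mpr ⟨hi, Finset.mem_univ i⟩
    have := (Finset.sum_eq_zero_iff_of_nonneg (fun j _ => sq_nonneg (n j))).mp hrest i hmem
    exact pow_eq_zero_iff (by norm_num) |>.mp this
  have hone : (n i₀)^2 = 1 := by
    have heq := Finset.add_sum_erase Finset.univ (fun i => (n i)^2) (Finset.mem_univ i₀)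
    rw [← heq, hrest] at hsumZ
    have hsumZ' : n i₀ ^ 2 + 0 = 1 := hsumZ
    linarith
  refine ⟨i₀, ?_, ?_⟩
  · have : |(n i₀ : ℝ)| = 1 := by
      have : ((n i₀ : ℝ))^2 = 1 := by exact_mod_cast hone
      nlinarith [abs_nonneg ((n i₀ : ℝ)), sq_abs ((n i₀ : ℝ))]
    rw [hdiff i₀, abs_mul, abs_of_pos hh, this, mul_one]
  · intro i hi
    have := hdiff i
    rw [hzero i hi] at this
    push_cast at this
    linarith
variable {d : ℕ}

local notation "E" => EuclideanSpace ℝ (Fin d)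

lemma aux_closed (I : Set (EuclideanSpace ℝ (Fin d))) (hI : IsClosed I) :
    IsClosed {xz : EuclideanSpace ℝ (Fin d) × EuclideanSpace ℝ (Fin d) |
      (segment ℝ xz.1 xz.2 ∩ I).Nonempty} := by
  have hset : {xz : E × E | (segment ℝ xz.1 xz.2 ∩ I).Nonempty}
      = Prod.snd '' {tp : Set.Icc (0:ℝ) 1 × (E × E) |
          (1 - (tp.1 : ℝ)) • tp.2.1 + (tp.1 : ℝ) • tp.2.2 ∈ I} := by
    ext ⟨x, z⟩
    constructor
    · rintro ⟨w, hw, hwI⟩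
      rw [segment_eq_image] at hw
      obtain ⟨t, ht, rfl⟩ := hw
      exact ⟨⟨⟨t, ht⟩, (x, z)⟩, hwI, rfl⟩
    · rintro ⟨⟨t, x', z'⟩, hmem, heq⟩
      rw [← heq]
      refine ⟨(1 - (t : ℝ)) • x' + (t : ℝ) • z', ?_, hmem⟩
      rw [segment_eq_image]
      exact ⟨t, t.2, rfl⟩
  rw [hset]
  haveI : CompactSpace (Set.Icc (0:ℝ) 1) := isCompact_iff_compactSpace.mp isCompact_Icc
  refine isClosedMap_snd_of_compactSpace _ ?_
  apply hI.preimage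
  fun_prop

lemma aux_face_closed (p : EuclideanSpace ℝ (Fin d)) (c : ℝ) :
    IsClosed {w : EuclideanSpace ℝ (Fin d) | ∀ i, |w i - p i| ≤ c} := by
  have : {w : E | ∀ i, |w i - p i| ≤ c} = ⋂ i, {w : E | |w i - p i| ≤ c} := by
    ext w; simp
  rw [this]
  refine isClosed_iInter fun i => ?_
  have hc : Continuous fun w : E => |w i - p i| := by
    have h1 : Continuous fun w : E => w i := (EuclideanSpace.proj (𝕜 := ℝ) i).continuous
    fun_prop
  exact isClosed_le hc continuous_const

lemma aux_vol {h : ℝ} (hh : 0 < h) (p q : EuclideanSpace ℝ (Fin d))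
    (i₀ : Fin d) (hpq0 : |p i₀ - q i₀| = h) (hpq1 : ∀ i, i ≠ i₀ → p i = q i)
    (y : EuclideanSpace ℝ (Fin d)) :
    volume {x : EuclideanSpace ℝ (Fin d) |
        (segment ℝ x (x + y) ∩
          ({w : EuclideanSpace ℝ (Fin d) | ∀ i, |w i - p i| ≤ h / 2} ∩
           {w : EuclideanSpace ℝ (Fin d) | ∀ i, |w i - q i| ≤ h / 2})).Nonempty}
      ≤ ENNReal.ofReal (h ^ (d - 1) * ‖y‖) := by
  set m : ℝ := (p i₀ + q i₀) / 2 with hm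
  set v : Fin d → EuclideanSpace ℝ (Fin d) :=
    fun i => if i = i₀ then -y else EuclideanSpace.single i h with hv
  set base : EuclideanSpace ℝ (Fin d) := (WithLp.equiv 2 (Fin d → ℝ)).symm
      (fun j => if j = i₀ then m else p j - h / 2) with hbase
  have hbasej : ∀ j, base j = if j = i₀ then m else p j - h / 2 := fun j => rfl
  have hsub : {x : EuclideanSpace ℝ (Fin d) |
        (segment ℝ x (x + y) ∩
          ({w : EuclideanSpace ℝ (Fin d) | ∀ i, |w i - p i| ≤ h / 2} ∩
           {w : EuclideanSpace ℝ (Fin d) | ∀ i, |w i - q i| ≤ h / 2})).Nonempty}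
      ⊆ base +ᵥ parallelepiped v := by
    rintro x ⟨w, hwseg, hwA, hwB⟩
    rw [segment_eq_image'] at hwseg
    obtain ⟨t, ht, hw⟩ := hwseg
    rw [add_sub_cancel_left] at hw
    have hxj : ∀ j, x j = w j - t * y j := by
      intro j
      have : w j = x j + t * y j := by rw [← hw]; rfl
      linarith
    have hwm : w i₀ = m := by
      have h1 := abs_le.mp (hwA i₀)
      have h2 := abs_le.mp (hwB i₀)
      rcases (abs_eq (le_of_lt hh)).mp hpq0 with hc | hc
      · rw [hm]; linarith
      · rw [hm]; linarith
    rw [Set.mem_vadd_set_iff_neg_vadd_mem, mem_parallelepiped_iff]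
    refine ⟨fun i => if i = i₀ then t else (w i - (p i - h / 2)) / h, ⟨?_, ?_⟩, ?_⟩
    · intro i
      by_cases hi : i = i₀
      · simpa [hi] using ht.1
      · have habs := abs_le.mp (hwA i)
        simp only [hi, if_false, Pi.zero_apply]
        have h0 : 0 ≤ w i - (p i - h / 2) := by linarith [habs.1]
        positivity
    · intro i
      by_cases hi : i = i₀
      · simpa [hi] using ht.2
      · have habs := abs_le.mp (hwA i)
        simp only [hi, if_false, Pi.one_apply]
        rw [div_le_one hh]
        linarith [habs.2]
    · apply PiLp.ext
      intro j
      have hval : ((-base) +ᵥ x) j = -(base j) + x j := rfl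
      have hsum : (∑ i, (if i = i₀ then t else (w i - (p i - h / 2)) / h) • v i) j
          = ∑ i, (if i = i₀ then t else (w i - (p i - h / 2)) / h) * v i j :=
        by rw [WithLp.ofLp_sum]; exact Finset.sum_apply j Finset.univ _
      have hterm : ∀ i : Fin d, (if i = i₀ then t else (w i - (p i - h / 2)) / h) * v i j
          = (if i = i₀ then t * (-(y j)) else
              (if i = j then w j - (p j - h / 2) else 0)) := by
        intro i
        by_cases hi : i = i₀
        · simp [hi, hv]
        · simp only [hi, if_false, hv, if_neg hi]
          rw [EuclideanSpace.single_apply]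
          by_cases hji : j = i
          · subst hji
            simp [div_mul_cancel₀ _ hh.ne']
          · rw [if_neg hji, if_neg (fun hc => hji hc.symm), mul_zero]
      rw [hval, hsum, Finset.sum_congr rfl fun i _ => hterm i]
      by_cases hj : j = i₀
      · subst hj
        rw [Finset.sum_eq_single_of_mem j (Finset.mem_univ j) ?_]
        · rw [if_pos rfl, hbasej, if_pos rfl, hxj, hwm]
          ring
        · intro b _ hb
          rw [if_neg hb, if_neg hb]
      · rw [Finset.sum_eq_add_of_mem i₀ j (Finset.mem_univ i₀) (Finset.mem_univ j)
            (fun hc => hj hc.symm) ?_]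
        · rw [if_pos rfl, if_neg hj, if_pos rfl, hbasej, if_neg hj, hxj]
          ring
        · intro c _ hc
          rw [if_neg hc.1, if_neg hc.2]
  have hdet : ((EuclideanSpace.basisFun (Fin d) ℝ).toBasis).det v = h ^ (d - 1) * (-(y i₀)) := by
    have hM : ((EuclideanSpace.basisFun (Fin d) ℝ).toBasis).toMatrix v
        = Matrix.updateCol (h • (1 : Matrix (Fin d) (Fin d) ℝ)) i₀ (fun i => -(y i)) := by
      ext i j
      rw [Module.Basis.toMatrix_apply]
      rw [OrthonormalBasis.coe_toBasis_repr_apply, EuclideanSpace.basisFun_repr]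
      rw [Matrix.updateCol_apply]
      by_cases hj : j = i₀
      · subst hj
        simp [hv]
      · rw [if_neg hj]
        simp only [hv, if_neg hj]
        rw [EuclideanSpace.single_apply]
        simp [Matrix.smul_apply, Matrix.one_apply, eq_comm]
    rw [Module.Basis.det_apply, hM, ← Matrix.cramer_apply, Matrix.cramer_smul, Matrix.cramer_one]
    simp [Fintype.card_fin]
  calc volume {x : EuclideanSpace ℝ (Fin d) |
        (segment ℝ x (x + y) ∩
          ({w : EuclideanSpace ℝ (Fin d) | ∀ i, |w i - p i| ≤ h / 2} ∩
           {w : EuclideanSpace ℝ (Fin d) | ∀ i, |w i - q i| ≤ h / 2})).Nonempty}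
      ≤ volume (base +ᵥ parallelepiped v) := measure_mono hsub
    _ = volume (parallelepiped v) := measure_vadd volume base _
    _ = ENNReal.ofReal |((EuclideanSpace.basisFun (Fin d) ℝ).toBasis).det v| := by
        rw [← (EuclideanSpace.basisFun (Fin d) ℝ).addHaar_eq_volume, Measure.addHaar_parallelepiped]
    _ ≤ ENNReal.ofReal (h ^ (d - 1) * ‖y‖) := by
        apply ENNReal.ofReal_le_ofReal
        rw [hdet, abs_mul, abs_neg, abs_of_pos (pow_pos hh _)]
        have : |y i₀| ≤ ‖y‖ := by
          rw [EuclideanSpace.norm_eq]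
          have h1 : |y i₀| = Real.sqrt (‖y i₀‖ ^ 2) := by
            rw [Real.sqrt_sq_eq_abs, Real.norm_eq_abs, abs_abs]
          rw [h1]
          apply Real.sqrt_le_sqrt
          exact Finset.single_le_sum (f := fun i => ‖y i‖ ^ 2)
            (fun i _ => sq_nonneg _) (Finset.mem_univ i₀)
        exact mul_le_mul_of_nonneg_left this (le_of_lt (pow_pos hh _))

/-- the measure of pairs of points of a bounded set `Ω` (of diameter at most
`R`) whose connecting segment crosses the common face of two neighboring grid cells,
weighted by their distance, scales like `h^(d−1)`. -/
theorem stmt_17 (d : ℕ) (hd : 1 ≤ d) (R : ℝ) (hR : 0 < R) :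
    ∃ C : ℝ, 0 < C ∧
      ∀ (Ω : Set (EuclideanSpace ℝ (Fin d))) (h : ℝ)
        (p q : EuclideanSpace ℝ (Fin d)),
        0 < h → Bornology.IsBounded Ω → Metric.diam Ω ≤ R →
        (∀ i, ∃ k : ℤ, p i = h * k) → (∀ i, ∃ k : ℤ, q i = h * k) →
        dist p q = h →
        (∫ x in Ω, ∫ z in Ω,
            (if (segment ℝ x z ∩
                  ({w : EuclideanSpace ℝ (Fin d) | ∀ i, |w i - p i| ≤ h / 2} ∩
                   {w : EuclideanSpace ℝ (Fin d) | ∀ i, |w i - q i| ≤ h / 2})).Nonempty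
              then dist x z else 0))
          ≤ C * h ^ (d - 1) := by
  have hVnn : (0:ℝ) ≤ (volume (Metric.closedBall (0 : EuclideanSpace ℝ (Fin d)) R)).toReal :=
    ENNReal.toReal_nonneg
  refine ⟨R * R * (volume (Metric.closedBall (0 : EuclideanSpace ℝ (Fin d)) R)).toReal + 1,
    by positivity, ?_⟩
  intro Ω h p q hh hΩb hΩd hpZ hqZ hpq
  obtain ⟨i₀, hi0, hi1⟩ := aux_index hh p q hpZ hqZ hpq
  set I : Set (EuclideanSpace ℝ (Fin d)) :=
    {w | ∀ i, |w i - p i| ≤ h / 2} ∩ {w | ∀ i, |w i - q i| ≤ h / 2} with hI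
  have hIc : IsClosed I := (aux_face_closed p (h / 2)).inter (aux_face_closed q (h / 2))
  have hS2 : IsClosed {xz : EuclideanSpace ℝ (Fin d) × EuclideanSpace ℝ (Fin d) |
      (segment ℝ xz.1 xz.2 ∩ I).Nonempty} := aux_closed I hIc
  set f : EuclideanSpace ℝ (Fin d) → EuclideanSpace ℝ (Fin d) → ℝ :=
    fun x z => if (segment ℝ x z ∩ I).Nonempty then dist x z else 0 with hf
  have hfm : Measurable fun xz : EuclideanSpace ℝ (Fin d) × EuclideanSpace ℝ (Fin d) =>
      f xz.1 xz.2 := by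
    simp only [hf]
    exact Measurable.ite hS2.measurableSet measurable_dist measurable_const
  have hfnn : ∀ x z, 0 ≤ f x z := by
    intro x z
    simp only [hf]
    split
    · exact dist_nonneg
    · exact le_rfl
  have hfR : ∀ x ∈ Ω, ∀ z ∈ Ω, f x z ≤ R := by
    intro x hx z hz
    simp only [hf]
    split
    · exact le_trans (Metric.dist_le_diam_of_mem hΩb hx hz) hΩd
    · exact hR.le
  set T : Set (EuclideanSpace ℝ (Fin d) × EuclideanSpace ℝ (Fin d)) :=
    {xz | (segment ℝ xz.1 xz.2 ∩ I).Nonempty} ∩ {xz | dist xz.1 xz.2 ≤ R} with hT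
  have hTm : MeasurableSet T :=
    hS2.measurableSet.inter ((isClosed_le continuous_dist continuous_const).measurableSet)
  -- the key pointwise bound in ℝ≥0∞, for fixed translation yy
  have key : ∀ yy : EuclideanSpace ℝ (Fin d),
      (∫⁻ x, ENNReal.ofReal R * T.indicator 1 (x, x + yy))
        ≤ (Metric.closedBall (0 : EuclideanSpace ℝ (Fin d)) R).indicator
            (fun _ => ENNReal.ofReal R * ENNReal.ofReal (h ^ (d - 1) * R)) yy := by
    intro yy
    by_cases hyy : ‖yy‖ ≤ R
    · have hSyy : MeasurableSet {x : EuclideanSpace ℝ (Fin d) |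
          (segment ℝ x (x + yy) ∩ I).Nonempty} := by
        have hcont : Measurable fun x : EuclideanSpace ℝ (Fin d) => (x, x + yy) := by fun_prop
        exact hcont hS2.measurableSet
      have hind : ∀ x : EuclideanSpace ℝ (Fin d),
          T.indicator (1 : EuclideanSpace ℝ (Fin d) × EuclideanSpace ℝ (Fin d) → ℝ≥0∞) (x, x + yy)
            ≤ Set.indicator {x : EuclideanSpace ℝ (Fin d) |
                (segment ℝ x (x + yy) ∩ I).Nonempty} 1 x := by
        intro x
        by_cases hx : (x, x + yy) ∈ T
        · rw [Set.indicator_of_mem hx, Set.indicator_of_mem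
            (show x ∈ {x : EuclideanSpace ℝ (Fin d) |
              (segment ℝ x (x + yy) ∩ I).Nonempty} from hx.1)]
          exact le_rfl
        · rw [Set.indicator_of_notMem hx]
          exact zero_le
      calc ∫⁻ x, ENNReal.ofReal R * T.indicator 1 (x, x + yy)
          ≤ ∫⁻ x, ENNReal.ofReal R * Set.indicator {x : EuclideanSpace ℝ (Fin d) |
              (segment ℝ x (x + yy) ∩ I).Nonempty} 1 x :=
            lintegral_mono fun x => mul_le_mul_right (hind x) _
        _ = ENNReal.ofReal R * volume {x : EuclideanSpace ℝ (Fin d) |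
              (segment ℝ x (x + yy) ∩ I).Nonempty} := by
            rw [lintegral_const_mul _ ((measurable_one).indicator hSyy),
              lintegral_indicator_one hSyy]
        _ ≤ ENNReal.ofReal R * ENNReal.ofReal (h ^ (d - 1) * ‖yy‖) :=
            mul_le_mul_right (aux_vol hh p q i₀ hi0 hi1 yy) _
        _ ≤ (Metric.closedBall (0 : EuclideanSpace ℝ (Fin d)) R).indicator
            (fun _ => ENNReal.ofReal R * ENNReal.ofReal (h ^ (d - 1) * R)) yy := by
            rw [Set.indicator_of_mem (Metric.mem_closedBall.mpr
              (by rwa [dist_zero_right]))]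
            exact mul_le_mul_right (ENNReal.ofReal_le_ofReal
              (mul_le_mul_of_nonneg_left hyy (le_of_lt (pow_pos hh _)))) _
    · have hzero : ∀ x : EuclideanSpace ℝ (Fin d),
          T.indicator (1 : EuclideanSpace ℝ (Fin d) × EuclideanSpace ℝ (Fin d) → ℝ≥0∞)
            (x, x + yy) = 0 := by
        intro x
        rw [Set.indicator_of_notMem]
        rintro ⟨-, h2⟩
        apply hyy
        have : dist x (x + yy) = ‖yy‖ := by
          rw [dist_self_add_right]
        rw [← this]
        exact h2
      simp only [hzero, mul_zero, lintegral_zero]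
      exact zero_le
  -- integrals as lintegrals
  have hginner : ∀ x, ∫ z in Ω, f x z
      = (∫⁻ z in Ω, ENNReal.ofReal (f x z)).toReal := by
    intro x
    rw [integral_eq_lintegral_of_nonneg_ae
      (Filter.Eventually.of_forall fun z => hfnn x z)
      ((hfm.comp (by fun_prop : Measurable fun z : EuclideanSpace ℝ (Fin d) =>
        ((x, z) : EuclideanSpace ℝ (Fin d) × EuclideanSpace ℝ (Fin d)))).aestronglyMeasurable)]
  have hgmeas : StronglyMeasurable fun x => ∫ z in Ω, f x z :=
    (hfm.stronglyMeasurable).integral_prod_right'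
  -- the main lintegral bound
  have hAbound : (∫⁻ x in Ω, ∫⁻ z in Ω, ENNReal.ofReal (f x z))
      ≤ ENNReal.ofReal R * ENNReal.ofReal (h ^ (d - 1) * R) *
        volume (Metric.closedBall (0 : EuclideanSpace ℝ (Fin d)) R) := by
    have hGm : Measurable fun xz : EuclideanSpace ℝ (Fin d) × EuclideanSpace ℝ (Fin d) =>
        ENNReal.ofReal R * T.indicator 1 xz :=
      (measurable_const.mul ((measurable_one).indicator hTm))
    have step1 : ∀ x ∈ Ω, (∫⁻ z in Ω, ENNReal.ofReal (f x z))
        ≤ ∫⁻ z, ENNReal.ofReal R * T.indicator 1 (x, z) := by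
      intro x hx
      have hmz : Measurable fun z : EuclideanSpace ℝ (Fin d) =>
          ENNReal.ofReal R * T.indicator 1 (x, z) :=
        hGm.comp (by fun_prop)
      refine le_trans (setLIntegral_mono hmz ?_) (setLIntegral_le_lintegral _ _)
      intro z hz
      by_cases hmem : (x, z) ∈ T
      · rw [Set.indicator_of_mem hmem, Pi.one_apply, mul_one]
        exact ENNReal.ofReal_le_ofReal (hfR x hx z hz)
      · have : f x z = 0 := by
          simp only [hf]
          rw [if_neg]
          intro hne
          exact hmem ⟨hne, le_trans (Metric.dist_le_diam_of_mem hΩb hx hz) hΩd⟩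
        rw [this]
        simp
    have hswapm : Measurable fun xy : EuclideanSpace ℝ (Fin d) × EuclideanSpace ℝ (Fin d) =>
        ENNReal.ofReal R * T.indicator 1 (xy.1, xy.1 + xy.2) :=
      hGm.comp (by fun_prop)
    calc (∫⁻ x in Ω, ∫⁻ z in Ω, ENNReal.ofReal (f x z))
        ≤ ∫⁻ x in Ω, ∫⁻ z, ENNReal.ofReal R * T.indicator 1 (x, z) :=
          setLIntegral_mono (Measurable.lintegral_prod_right hGm) step1
      _ ≤ ∫⁻ x, ∫⁻ z, ENNReal.ofReal R * T.indicator 1 (x, z) :=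
          setLIntegral_le_lintegral _ _
      _ = ∫⁻ x, ∫⁻ yy, ENNReal.ofReal R * T.indicator 1 (x, x + yy) :=
          lintegral_congr fun x =>
            (lintegral_add_left_eq_self
              (fun z => ENNReal.ofReal R * T.indicator 1 (x, z)) x).symm
      _ = ∫⁻ yy, ∫⁻ x, ENNReal.ofReal R * T.indicator 1 (x, x + yy) :=
          lintegral_lintegral_swap hswapm.aemeasurable
      _ ≤ ∫⁻ yy, (Metric.closedBall (0 : EuclideanSpace ℝ (Fin d)) R).indicator
            (fun _ => ENNReal.ofReal R * ENNReal.ofReal (h ^ (d - 1) * R)) yy :=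
          lintegral_mono key
      _ = ENNReal.ofReal R * ENNReal.ofReal (h ^ (d - 1) * R) *
            volume (Metric.closedBall (0 : EuclideanSpace ℝ (Fin d)) R) := by
          rw [lintegral_indicator measurableSet_closedBall, setLIntegral_const]
  -- put everything together
  have hfin : ENNReal.ofReal R * ENNReal.ofReal (h ^ (d - 1) * R) *
      volume (Metric.closedBall (0 : EuclideanSpace ℝ (Fin d)) R) ≠ ⊤ :=
    ENNReal.mul_ne_top (ENNReal.mul_ne_top ENNReal.ofReal_ne_top ENNReal.ofReal_ne_top)
      (measure_closedBall_lt_top).ne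
  have hLHS : (∫ x in Ω, ∫ z in Ω, f x z)
      = (∫⁻ x in Ω, ENNReal.ofReal (∫ z in Ω, f x z)).toReal := by
    rw [integral_eq_lintegral_of_nonneg_ae
      (Filter.Eventually.of_forall fun x => integral_nonneg fun z => hfnn x z)
      hgmeas.aestronglyMeasurable]
  have hle1 : (∫⁻ x in Ω, ENNReal.ofReal (∫ z in Ω, f x z))
      ≤ ∫⁻ x in Ω, ∫⁻ z in Ω, ENNReal.ofReal (f x z) := by
    refine lintegral_mono fun x => ?_
    rw [hginner x]
    exact ENNReal.ofReal_toReal_le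
  have hmain : (∫ x in Ω, ∫ z in Ω, f x z)
      ≤ R * (h ^ (d - 1) * R) *
        (volume (Metric.closedBall (0 : EuclideanSpace ℝ (Fin d)) R)).toReal := by
    rw [hLHS]
    have := ENNReal.toReal_mono hfin (le_trans hle1 hAbound)
    refine le_trans this ?_
    rw [ENNReal.toReal_mul, ENNReal.toReal_mul, ENNReal.toReal_ofReal hR.le,
      ENNReal.toReal_ofReal (by positivity)]
  refine le_trans hmain ?_
  have hpow : (0:ℝ) ≤ h ^ (d - 1) := (pow_pos hh _).le
  nlinarith [hpow, hVnn, mul_nonneg (mul_nonneg hR.le hR.le) hVnn]
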